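/- Let ℰ be a ∩-stable generator of 𝒮 and let π₁, π₂ : Ω → C(S) be countable random sets that are σ-finite on ℰ. If P(N_{A₁}(π₁)=k₁, …, N_{Aₙ}(π₁)=kₙ) = P(N_{A₁}(π₂)=k₁, …, N_{Aₙ}(π₂)=kₙ) for all n ∈ ℕ, A₁,…,Aₙ ∈ ℰ and k₁,…,kₙ ∈ ℕ₀ ∪ {∞}, then π₁ and π₂ have the same law on (C(S), 𝒞(𝒮)). -/

import Mathlib

open MeasureTheory Filter Set

/-- The space of countable subsets of `S`. -/
def CS (S : Type*) : Type _ := {M : Set S // M.Countable}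

/-- The counting map `N_A : C(S) → ℕ₀ ∪ {∞}`, `M ↦ |M ∩ A|`. -/
noncomputable def NA {S : Type*} (A : Set S) (M : CS S) : ℕ∞ := (M.1 ∩ A).encard

/-- The counting σ-field `𝒞(𝒯)` on `C(S)`: the smallest σ-field making every
`N_A`, `A ∈ 𝒯`, measurable. -/
noncomputable def countingSigma {S : Type*} (T : Set (Set S)) : MeasurableSpace (CS S) :=
  ⨆ A ∈ T, MeasurableSpace.comap (NA A) ⊤

/-- The hit-or-miss σ-field `𝔥(ℰ)` on `C(S)`. -/
def hitOrMiss {S : Type*} (E : Set (Set S)) : MeasurableSpace (CS S) :=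
  MeasurableSpace.generateFrom ((fun A => {M : CS S | (M.1 ∩ A).Nonempty}) '' E)

/-- The counting σ-field `𝒞(𝒮)` of the full σ-field of the state space. -/
noncomputable def countingSigmaField (S : Type*) [MeasurableSpace S] : MeasurableSpace (CS S) :=
  countingSigma {A : Set S | MeasurableSet A}


lemma measurable_enat_of_Iic {α : Type*} {m : MeasurableSpace α} (f : α → ℕ∞)
    (h : ∀ k : ℕ, MeasurableSet[m] {x | f x ≤ k}) : Measurable[m] f := by
  apply measurable_to_countable'
  intro y
  match y with
  | ⊤ =>
    have : f ⁻¹' {⊤} = (⋃ n : ℕ, {x | f x ≤ n})ᶜ := by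
      ext x
      simp only [mem_preimage, mem_singleton_iff, mem_compl_iff, mem_iUnion, mem_setOf_eq,
        not_exists]
      constructor
      · intro hx n; rw [hx]; simp
      · intro hx
        by_contra hne
        obtain ⟨n, hn⟩ := WithTop.ne_top_iff_exists.mp hne
        exact hx n (by rw [← hn]; exact le_rfl)
    rw [this]
    exact (MeasurableSet.iUnion fun n => h n).compl
  | (n : ℕ) =>
    have : f ⁻¹' {(n : ℕ∞)} = {x | f x ≤ n} \ ⋃ (m : ℕ) (_ : m < n), {x | f x ≤ m} := by
      ext x
      simp only [mem_preimage, mem_singleton_iff, mem_diff, mem_setOf_eq, mem_iUnion, not_exists]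
      constructor
      · intro hx
        refine ⟨le_of_eq hx, fun m hm hle => ?_⟩
        rw [hx] at hle
        exact absurd (Nat.cast_le.mp hle) (Nat.not_le.mpr hm)
      · rintro ⟨hle, hlt⟩
        obtain ⟨m, hm⟩ := WithTop.ne_top_iff_exists.mp
          (fun ht : f x = ⊤ => by rw [ht] at hle; simp at hle)
        rw [← hm] at hle ⊢
        have hmn : m ≤ n := Nat.cast_le.mp hle
        rcases eq_or_lt_of_le hmn with h' | h'
        · exact congrArg _ h'
        · exact absurd hm.ge (hlt m h')
    rw [this]
    exact (h n).diff (MeasurableSet.iUnion fun m => MeasurableSet.iUnion fun _ => h m)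

lemma encard_iUnion_monotone {α : Type*} (s : ℕ → Set α) (hmono : Monotone s) :
    (⋃ n, s n).encard = ⨆ n, (s n).encard := by
  refine le_antisymm ?_ (iSup_le fun n => encard_mono (subset_iUnion s n))
  by_cases htop : (⨆ n, (s n).encard) = ⊤
  · simp [htop]
  · obtain ⟨k, hk⟩ := WithTop.ne_top_iff_exists.mp htop
    rw [← hk]
    by_contra hlt
    replace hlt := lt_of_not_ge hlt
    have hk1 : (k : ℕ∞) + 1 ≤ (⋃ n, s n).encard := Order.add_one_le_of_lt hlt
    obtain ⟨t, hts, htk⟩ := Set.exists_subset_encard_eq hk1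
    have htfin : t.Finite := by
      rw [← Set.encard_ne_top_iff, htk]
      intro h
      rw [show ((k : ℕ∞) + 1) = ((k+1 : ℕ) : ℕ∞) by push_cast; ring] at h
      exact (WithTop.coe_ne_top) h
    obtain ⟨u, rfl⟩ := htfin.exists_finset_coe
    obtain ⟨N, hN⟩ := (Monotone.directed_le hmono).exists_mem_subset_of_finset_subset_biUnion hts
    have h1 : (k : ℕ∞) + 1 ≤ (s N).encard := htk ▸ encard_mono hN
    have h2 : (k : ℕ∞) + 1 ≤ (k : ℕ∞) := by
      calc (k : ℕ∞) + 1 ≤ (s N).encard := h1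
        _ ≤ ⨆ n, (s n).encard := le_iSup (fun n => (s n).encard) N
        _ = (k : ℕ∞) := hk.symm
    exact absurd h2 (by exact_mod_cast Nat.not_succ_le_self k)

lemma encard_biUnion_range {α : Type*} (t : ℕ → Set α) (hd : Pairwise (Function.onFun Disjoint t)) (j : ℕ) :
    (⋃ m ∈ Finset.range j, t m).encard = ∑ m ∈ Finset.range j, (t m).encard := by
  induction j with
  | zero => simp
  | succ j ih =>
    rw [Finset.range_add_one]
    rw [Finset.sum_insert (by simp), Finset.set_biUnion_insert]
    rw [Set.encard_union_eq, ih, add_comm]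
    exact Set.disjoint_iUnion₂_right.mpr fun m hm =>
      hd (by simp at hm; omega)

lemma encard_iUnion_of_disjoint {α : Type*} (t : ℕ → Set α) (hd : Pairwise (Function.onFun Disjoint t)) :
    (⋃ n, t n).encard = ⨆ j, ∑ m ∈ Finset.range j, (t m).encard := by
  have h1 : (⋃ n, t n) = ⋃ j, ⋃ m ∈ Finset.range j, t m := by
    ext x
    simp only [Set.mem_iUnion, Finset.mem_range]
    exact ⟨fun ⟨n, hn⟩ => ⟨n + 1, n, Nat.lt_succ_self n, hn⟩, fun ⟨j, m, _, hm⟩ => ⟨m, hm⟩⟩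
  have hmono : Monotone (fun j => ⋃ m ∈ Finset.range j, t m) := fun a b hab =>
    Set.iUnion₂_subset fun m hm => Set.subset_biUnion_of_mem (Finset.mem_range.mpr (lt_of_lt_of_le (Finset.mem_range.mp hm) hab))
  rw [h1, encard_iUnion_monotone _ hmono]
  exact iSup_congr fun j => encard_biUnion_range t hd j

lemma measurable_enat_op {α : Type*} {m : MeasurableSpace α} (op : ℕ∞ → ℕ∞ → ℕ∞) {f g : α → ℕ∞}
    (hf : Measurable[m] f) (hg : Measurable[m] g) : Measurable[m] (fun x => op (f x) (g x)) :=
  (measurable_of_countable (fun p : ℕ∞ × ℕ∞ => op p.1 p.2)).comp (hf.prodMk hg)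

lemma measurable_enat_sum {α : Type*} {m : MeasurableSpace α} (f : ℕ → α → ℕ∞)
    (hf : ∀ n, Measurable[m] (f n)) (j : ℕ) :
    Measurable[m] (fun x => ∑ i ∈ Finset.range j, f i x) := by
  induction j with
  | zero => simpa using measurable_const
  | succ j ih =>
    have : (fun x => ∑ i ∈ Finset.range (j+1), f i x)
        = fun x => (∑ i ∈ Finset.range j, f i x) + f j x := by
      ext x; rw [Finset.sum_range_succ]
    rw [this]
    exact measurable_enat_op (· + ·) ih (hf j)

lemma measurable_enat_iSup {α : Type*} {m : MeasurableSpace α} (f : ℕ → α → ℕ∞)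
    (hf : ∀ n, Measurable[m] (f n)) : Measurable[m] (fun x => ⨆ n, f n x) := by
  apply measurable_enat_of_Iic
  intro k
  have : {x | (⨆ n, f n x) ≤ (k : ℕ∞)} = ⋂ n, {x | f n x ≤ (k : ℕ∞)} := by
    ext x; simp [iSup_le_iff]
  rw [this]
  exact MeasurableSet.iInter fun n =>
    (hf n) (MeasurableSet.of_discrete (s := Set.Iic (k : ℕ∞)))

lemma measurable_NA_mem {S : Type*} (E : Set (Set S)) {A : Set S} (hA : A ∈ E) :
    Measurable[countingSigma E] (NA A) := by
  intro t _
  have hle : MeasurableSpace.comap (NA A) ⊤ ≤ countingSigma E :=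
    le_iSup₂ (f := fun A (_ : A ∈ E) => MeasurableSpace.comap (NA A) ⊤) A hA
  exact hle _ ⟨t, trivial, rfl⟩

lemma NA_repr_on_T {S : Type*} [MeasurableSpace S] (E : Set (Set S))
    (hstable : ∀ A ∈ E, ∀ B ∈ E, A ∩ B ∈ E)
    (hgen : MeasurableSpace.generateFrom E = ‹MeasurableSpace S›)
    (c : ℕ → Set S) (hCE : ∀ n, c n ∈ E) :
    ∀ ⦃B : Set S⦄, MeasurableSet B → ∀ n : ℕ, ∃ f : CS S → ℕ∞,
      Measurable[countingSigma E] f ∧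
      ∀ M : CS S, (∀ m, (M.1 ∩ c m).Finite) → NA (B ∩ c n) M = f M := by
  have h_eq : ‹MeasurableSpace S› = MeasurableSpace.generateFrom E := hgen.symm
  have h_pi : IsPiSystem E := fun A hA B hB _ => hstable A hA B hB
  refine MeasurableSpace.induction_on_inter (C := fun B _ => ∀ n : ℕ, ∃ f : CS S → ℕ∞,
      Measurable[countingSigma E] f ∧
      ∀ M : CS S, (∀ m, (M.1 ∩ c m).Finite) → NA (B ∩ c n) M = f M)
    h_eq h_pi ?_ ?_ ?_ ?_
  · -- empty
    intro n
    exact ⟨fun _ => 0, @measurable_const ℕ∞ (CS S) _ (countingSigma E) 0, fun M _ => by simp [NA]⟩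
  · -- basic
    intro B hBE n
    exact ⟨NA (B ∩ c n), measurable_NA_mem E (hstable B hBE (c n) (hCE n)), fun M _ => rfl⟩
  · -- compl
    intro B hBmeas hB n
    obtain ⟨f, hf, hfeq⟩ := hB n
    refine ⟨fun M => NA (c n) M - f M,
      measurable_enat_op (· - ·) (measurable_NA_mem E (hCE n)) hf, ?_⟩
    intro M hM
    have hsub : M.1 ∩ c n = (M.1 ∩ (B ∩ c n)) ∪ (M.1 ∩ (Bᶜ ∩ c n)) := by
      ext x
      by_cases hx : x ∈ B <;> simp [hx]
    have hdisj : Disjoint (M.1 ∩ (B ∩ c n)) (M.1 ∩ (Bᶜ ∩ c n)) := by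
      apply Set.disjoint_left.mpr
      rintro x ⟨_, hxB, _⟩ ⟨_, hxB', _⟩
      exact hxB' hxB
    have hsplit : NA (c n) M = NA (B ∩ c n) M + NA (Bᶜ ∩ c n) M := by
      unfold NA
      rw [hsub, Set.encard_union_eq hdisj]
    have hfin : NA (B ∩ c n) M ≠ ⊤ := by
      rw [NA, Set.encard_ne_top_iff]
      exact (hM n).subset (fun x hx => ⟨hx.1, hx.2.2⟩)
    show NA (Bᶜ ∩ c n) M = NA (c n) M - f M
    rw [← hfeq M hM, hsplit]
    exact ((ENat.addLECancellable_of_ne_top hfin).add_tsub_cancel_left).symm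
  · -- union
    intro g hdisj _ hind n
    choose f hf hfeq using fun m => hind m n
    refine ⟨fun M => ⨆ j, ∑ m ∈ Finset.range j, f m M,
      measurable_enat_iSup _ (fun j => measurable_enat_sum f hf j), ?_⟩
    intro M hM
    have h1 : M.1 ∩ ((⋃ m, g m) ∩ c n) = ⋃ m, M.1 ∩ (g m ∩ c n) := by
      ext x
      simp only [Set.mem_inter_iff, Set.mem_iUnion]
      tauto
    have h2 : Pairwise (Function.onFun Disjoint fun m => M.1 ∩ (g m ∩ c n)) := by
      intro i j hij
      exact Set.disjoint_left.mpr fun x ⟨_, hxi, _⟩ ⟨_, hxj, _⟩ =>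
        Set.disjoint_left.mp (hdisj hij) hxi hxj
    rw [NA, h1, encard_iUnion_of_disjoint _ h2]
    exact iSup_congr fun j => Finset.sum_congr rfl fun m _ => hfeq m M hM

lemma NA_full_repr {S : Type*} [MeasurableSpace S] (E : Set (Set S))
    (hstable : ∀ A ∈ E, ∀ B ∈ E, A ∩ B ∈ E)
    (hgen : MeasurableSpace.generateFrom E = ‹MeasurableSpace S›)
    (c : ℕ → Set S) (hCE : ∀ n, c n ∈ E) (hcuniv : (⋃ n, c n) = Set.univ)
    {B : Set S} (hB : MeasurableSet B) :
    ∃ f : CS S → ℕ∞, Measurable[countingSigma E] f ∧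
      ∀ M : CS S, (∀ m, (M.1 ∩ c m).Finite) → NA B M = f M := by
  classical
  have hcmeas : ∀ n, MeasurableSet (c n) := fun n => by
    rw [← hgen]; exact MeasurableSpace.measurableSet_generateFrom (hCE n)
  set U : ℕ → Set S := fun j => ⋃ m ∈ Finset.range j, c m with hU
  have hUmeas : ∀ j, MeasurableSet (U j) :=
    fun j => MeasurableSet.biUnion (Finset.range j).countable_toSet fun m _ => hcmeas m
  set D : ℕ → Set S := fun m => c m ∩ (U m)ᶜ with hD
  have hrepr := fun m => NA_repr_on_T E hstable hgen c hCE
    (MeasurableSet.inter hB (hUmeas m).compl) m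
  choose f hf hfeq using hrepr
  refine ⟨fun M => ⨆ j, ∑ m ∈ Finset.range j, f m M,
    measurable_enat_iSup _ (fun j => measurable_enat_sum f hf j), ?_⟩
  intro M hM
  have hDdisj : Pairwise (Function.onFun Disjoint fun m => M.1 ∩ (B ∩ D m)) := by
    intro i j hij
    wlog hlt : i < j generalizing i j
    · exact (this hij.symm (by omega)).symm
    refine Set.disjoint_left.mpr ?_
    rintro x ⟨_, _, hxi, _⟩ ⟨_, _, _, hxj⟩
    exact hxj (Set.mem_biUnion (Finset.mem_range.mpr hlt) hxi)
  have hcover : M.1 ∩ B = ⋃ m, M.1 ∩ (B ∩ D m) := by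
    ext x
    simp only [Set.mem_inter_iff, Set.mem_iUnion]
    constructor
    · rintro ⟨hxM, hxB⟩
      have hx : ∃ n, x ∈ c n := by
        have := hcuniv ▸ Set.mem_univ x
        simpa using (hcuniv.symm ▸ Set.mem_univ x : x ∈ ⋃ n, c n)
      obtain ⟨n, hn⟩ := hx
      have hex : ∃ n, x ∈ c n := ⟨n, hn⟩
      let n₀ := Nat.find hex
      refine ⟨n₀, hxM, hxB, Nat.find_spec hex, ?_⟩
      intro hxU
      obtain ⟨m, hm, hxm⟩ := Set.mem_iUnion₂.mp hxU
      exact absurd hxm (Nat.find_min hex (Finset.mem_range.mp hm))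
    · rintro ⟨m, hxM, hxB, _⟩
      exact ⟨hxM, hxB⟩
  have hstep : ∀ m, NA (B ∩ (U m)ᶜ ∩ c m) M = (M.1 ∩ (B ∩ D m)).encard := by
    intro m
    rw [NA]
    congr 1
    ext x
    simp only [Set.mem_inter_iff, Set.mem_compl_iff, hD]
    tauto
  rw [NA, hcover, encard_iUnion_of_disjoint _ hDdisj]
  refine iSup_congr fun j => Finset.sum_congr rfl fun m _ => ?_
  rw [← hstep m, hfeq m M hM]

lemma trace_exists {S : Type*} [MeasurableSpace S] (E : Set (Set S))
    (hstable : ∀ A ∈ E, ∀ B ∈ E, A ∩ B ∈ E)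
    (hgen : MeasurableSpace.generateFrom E = ‹MeasurableSpace S›)
    (c : ℕ → Set S) (hCE : ∀ n, c n ∈ E) (hcuniv : (⋃ n, c n) = Set.univ)
    {G : Set (CS S)} (hG : MeasurableSet[countingSigmaField S] G) :
    ∃ G', MeasurableSet[countingSigma E] G' ∧
      G ∩ {M : CS S | ∀ m, (M.1 ∩ c m).Finite} = G' ∩ {M : CS S | ∀ m, (M.1 ∩ c m).Finite} := by
  set T : Set (CS S) := {M : CS S | ∀ m, (M.1 ∩ c m).Finite} with hT
  let m' : MeasurableSpace (CS S) :=
    { MeasurableSet' := fun G => ∃ G', MeasurableSet[countingSigma E] G' ∧ G ∩ T = G' ∩ T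
      measurableSet_empty := ⟨∅, @MeasurableSet.empty _ (countingSigma E), by simp⟩
      measurableSet_compl := by
        rintro G ⟨G', hG', heq⟩
        refine ⟨G'ᶜ, hG'.compl, ?_⟩
        ext M
        simp only [Set.mem_inter_iff, Set.mem_compl_iff]
        constructor
        · rintro ⟨hn, hMT⟩
          refine ⟨fun hM' => hn ?_, hMT⟩
          have : M ∈ G' ∩ T := ⟨hM', hMT⟩
          rw [← heq] at this
          exact this.1
        · rintro ⟨hn, hMT⟩
          refine ⟨fun hM => hn ?_, hMT⟩
          have : M ∈ G ∩ T := ⟨hM, hMT⟩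
          rw [heq] at this
          exact this.1
      measurableSet_iUnion := by
        intro g hg
        choose G' hG' heq using hg
        refine ⟨⋃ n, G' n, MeasurableSet.iUnion hG', ?_⟩
        ext M
        simp only [Set.mem_inter_iff, Set.mem_iUnion]
        constructor
        · rintro ⟨⟨n, hn⟩, hMT⟩
          have : M ∈ G' n ∩ T := heq n ▸ (⟨hn, hMT⟩ : M ∈ g n ∩ T)
          exact ⟨⟨n, this.1⟩, hMT⟩
        · rintro ⟨⟨n, hn⟩, hMT⟩
          have : M ∈ g n ∩ T := (heq n).symm ▸ (⟨hn, hMT⟩ : M ∈ G' n ∩ T)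
          exact ⟨⟨n, this.1⟩, hMT⟩ }
  have hle : countingSigmaField S ≤ m' := by
    rw [countingSigmaField, countingSigma]
    refine iSup₂_le fun A hA => ?_
    intro s hs
    obtain ⟨V, -, rfl⟩ := hs
    obtain ⟨f, hf, hfeq⟩ := NA_full_repr E hstable hgen c hCE hcuniv hA
    refine ⟨f ⁻¹' V, hf trivial, ?_⟩
    ext M
    simp only [Set.mem_inter_iff, Set.mem_preimage]
    constructor
    · rintro ⟨hV, hMT⟩
      exact ⟨by rw [← hfeq M hMT]; exact hV, hMT⟩
    · rintro ⟨hV, hMT⟩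
      exact ⟨by rw [hfeq M hMT]; exact hV, hMT⟩
  exact hle G hG

def fddSets {S : Type*} (E : Set (Set S)) : Set (Set (CS S)) :=
  {s | ∃ (n : ℕ) (A : Fin n → Set S) (k : Fin n → ℕ∞),
    (∀ i, A i ∈ E) ∧ s = {M | ∀ i, NA (A i) M = k i}}

lemma isPiSystem_fddSets {S : Type*} (E : Set (Set S)) : IsPiSystem (fddSets E) := by
  rintro s ⟨n, A, k, hA, rfl⟩ t ⟨m, B, l, hB, rfl⟩ -
  refine ⟨n + m, Fin.append A B, Fin.append k l, ?_, ?_⟩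
  · intro i
    refine Fin.addCases (fun j => ?_) (fun j => ?_) i
    · rw [Fin.append_left]; exact hA j
    · rw [Fin.append_right]; exact hB j
  · ext M
    simp only [Set.mem_inter_iff, Set.mem_setOf_eq]
    constructor
    · rintro ⟨h1, h2⟩ i
      refine Fin.addCases (fun j => ?_) (fun j => ?_) i
      · rw [Fin.append_left, Fin.append_left]; exact h1 j
      · rw [Fin.append_right, Fin.append_right]; exact h2 j
    · intro h
      constructor
      · intro j
        have := h (Fin.castAdd m j)
        rwa [Fin.append_left, Fin.append_left] at this
      · intro j
        have := h (Fin.natAdd n j)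
        rwa [Fin.append_right, Fin.append_right] at this

lemma generateFrom_fddSets {S : Type*} (E : Set (Set S)) :
    MeasurableSpace.generateFrom (fddSets E) = countingSigma E := by
  refine le_antisymm ?_ ?_
  · refine MeasurableSpace.generateFrom_le ?_
    rintro s ⟨n, A, k, hA, rfl⟩
    have : {M : CS S | ∀ i, NA (A i) M = k i} = ⋂ i, NA (A i) ⁻¹' {k i} := by
      ext M; simp [Set.mem_iInter]
    rw [this]
    exact MeasurableSet.iInter fun i => measurable_NA_mem E (hA i) trivial
  · rw [countingSigma]
    refine iSup₂_le fun A hA => ?_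
    intro s hs
    obtain ⟨V, -, rfl⟩ := hs
    have : NA A ⁻¹' V = ⋃ k ∈ V, NA A ⁻¹' {k} := by
      ext M; simp
    rw [this]
    refine MeasurableSet.biUnion (Set.to_countable V) fun k _ => ?_
    refine MeasurableSpace.measurableSet_generateFrom ?_
    refine ⟨1, fun _ => A, fun _ => k, fun _ => hA, ?_⟩
    ext M
    simp [Fin.forall_fin_one]

theorem uniqueness_sigmaFinite_fdd {Ω S : Type*} [MeasurableSpace Ω] [MeasurableSpace S]
    (P : Measure Ω) [IsProbabilityMeasure P]
    (E : Set (Set S))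
    (hstable : ∀ A ∈ E, ∀ B ∈ E, A ∩ B ∈ E)
    (hgen : MeasurableSpace.generateFrom E = ‹MeasurableSpace S›)
    (π₁ π₂ : Ω → CS S)
    (hm₁ : @Measurable Ω (CS S) _ (countingSigmaField S) π₁)
    (hm₂ : @Measurable Ω (CS S) _ (countingSigmaField S) π₂)
    (hsf₁ : ∃ A : ℕ → Set S, (∀ n, A n ∈ E) ∧ (⋃ n, A n) = Set.univ ∧
      ∀ ω n, ((π₁ ω).1 ∩ A n).Finite)
    (hsf₂ : ∃ A : ℕ → Set S, (∀ n, A n ∈ E) ∧ (⋃ n, A n) = Set.univ ∧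
      ∀ ω n, ((π₂ ω).1 ∩ A n).Finite)
    (hfdd : ∀ (n : ℕ) (A : Fin n → Set S), (∀ i, A i ∈ E) → ∀ k : Fin n → ℕ∞,
      P {ω | ∀ i, NA (A i) (π₁ ω) = k i} = P {ω | ∀ i, NA (A i) (π₂ ω) = k i}) :
    @Measure.map Ω (CS S) _ (countingSigmaField S) π₁ P =
      @Measure.map Ω (CS S) _ (countingSigmaField S) π₂ P := by
  obtain ⟨A1, hA1E, hA1univ, hA1fin⟩ := hsf₁
  obtain ⟨A2, hA2E, hA2univ, hA2fin⟩ := hsf₂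
  -- E-sets are measurable, countingSigma E ≤ countingSigmaField S
  have hEmeas : ∀ A ∈ E, MeasurableSet A := fun A hA => by
    rw [← hgen]; exact MeasurableSpace.measurableSet_generateFrom hA
  have hle : countingSigma E ≤ countingSigmaField S := by
    rw [countingSigma, countingSigmaField, countingSigma]
    exact iSup₂_le fun A hA =>
      le_iSup₂ (f := fun A (_ : A ∈ {A : Set S | MeasurableSet A}) =>
        MeasurableSpace.comap (NA A) ⊤) A (hEmeas A hA)
  have hm₁E : ∀ {G : Set (CS S)}, MeasurableSet[countingSigma E] G →
      MeasurableSet (π₁ ⁻¹' G) := fun hG => hm₁ (hle _ hG)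
  have hm₂E : ∀ {G : Set (CS S)}, MeasurableSet[countingSigma E] G →
      MeasurableSet (π₂ ⁻¹' G) := fun hG => hm₂ (hle _ hG)
  -- agreement of the two image measures on countingSigma E
  have hMeq : ∀ G, MeasurableSet[countingSigma E] G → P (π₁ ⁻¹' G) = P (π₂ ⁻¹' G) := by
    refine @MeasurableSpace.induction_on_inter (CS S) (countingSigma E)
      (fun G _ => P (π₁ ⁻¹' G) = P (π₂ ⁻¹' G)) (fddSets E)
      (generateFrom_fddSets E).symm (isPiSystem_fddSets E) (by simp) ?_ ?_ ?_
    · rintro s ⟨n, A, k, hA, rfl⟩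
      exact hfdd n A hA k
    · intro G hG hGeq
      rw [Set.preimage_compl, Set.preimage_compl,
        measure_compl (hm₁E hG) (measure_ne_top P _),
        measure_compl (hm₂E hG) (measure_ne_top P _), hGeq]
    · intro g hdisj hmeas hind
      rw [Set.preimage_iUnion, Set.preimage_iUnion,
        measure_iUnion (fun i j hij => ((hdisj hij).preimage π₁))
          (fun i => hm₁E (hmeas i)),
        measure_iUnion (fun i j hij => ((hdisj hij).preimage π₂))
          (fun i => hm₂E (hmeas i))]
      exact tsum_congr hind
  -- the interleaved covering sequence
  set c : ℕ → Set S := fun n => if n % 2 = 0 then A1 (n / 2) else A2 (n / 2) with hc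
  have hCE : ∀ n, c n ∈ E := fun n => by
    by_cases h : n % 2 = 0 <;> simp only [hc, h, if_true, if_false, reduceIte] <;>
      first | exact hA1E _ | exact hA2E _
  have hcuniv : (⋃ n, c n) = Set.univ := by
    rw [Set.eq_univ_iff_forall]
    intro x
    have := Set.eq_univ_iff_forall.mp hA1univ x
    obtain ⟨kk, hkk⟩ := Set.mem_iUnion.mp this
    refine Set.mem_iUnion.mpr ⟨2 * kk, ?_⟩
    simp only [hc, Nat.mul_mod_right, if_true, reduceIte]
    rwa [Nat.mul_div_cancel_left kk (by norm_num)]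
  set T : Set (CS S) := {M : CS S | ∀ m, (M.1 ∩ c m).Finite} with hTdef
  -- T and the analogous sets are measurable w.r.t. countingSigma E
  have hfinset : ∀ (d : ℕ → Set S) (_ : ∀ n, d n ∈ E),
      MeasurableSet[countingSigma E] {M : CS S | ∀ m, (M.1 ∩ d m).Finite} := by
    intro d hd
    have : {M : CS S | ∀ m, (M.1 ∩ d m).Finite} = ⋂ m, (NA (d m) ⁻¹' {⊤})ᶜ := by
      ext M
      simp only [Set.mem_iInter, Set.mem_compl_iff, Set.mem_preimage, Set.mem_singleton_iff,
        Set.mem_setOf_eq, NA]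
      exact forall_congr' fun m => (Set.encard_ne_top_iff).symm.trans (by tauto)
    rw [this]
    exact MeasurableSet.iInter fun m => (measurable_NA_mem E (hd m) trivial).compl
  have hTmeas : MeasurableSet[countingSigma E] T := hfinset c hCE
  -- both processes live on T almost surely
  set T2 : Set (CS S) := {M : CS S | ∀ m, (M.1 ∩ A2 m).Finite} with hT2def
  set T1 : Set (CS S) := {M : CS S | ∀ m, (M.1 ∩ A1 m).Finite} with hT1def
  have hT2meas : MeasurableSet[countingSigma E] T2 := hfinset A2 hA2E
  have hT1meas : MeasurableSet[countingSigma E] T1 := hfinset A1 hA1E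
  have hpre1 : π₁ ⁻¹' T = π₁ ⁻¹' T2 := by
    ext ω
    simp only [Set.mem_preimage, hTdef, hT2def, Set.mem_setOf_eq]
    constructor
    · intro h m
      have this2 : ((π₁ ω).1 ∩ (if (2*m+1) % 2 = 0 then A1 ((2*m+1)/2) else A2 ((2*m+1)/2))).Finite :=
        h (2 * m + 1)
      rw [show (2 * m + 1) % 2 = 1 by omega, show (2 * m + 1) / 2 = m by omega] at this2
      simpa using this2
    · intro h m
      by_cases hm : m % 2 = 0 <;> simp only [hc, hm, reduceIte, if_true, if_false]
      · exact hA1fin ω _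
      · exact h _
  have hpre2 : π₂ ⁻¹' T = π₂ ⁻¹' T1 := by
    ext ω
    simp only [Set.mem_preimage, hTdef, hT1def, Set.mem_setOf_eq]
    constructor
    · intro h m
      have this2 : ((π₂ ω).1 ∩ (if (2*m) % 2 = 0 then A1 ((2*m)/2) else A2 ((2*m)/2))).Finite :=
        h (2 * m)
      rw [show (2 * m) % 2 = 0 by omega, show (2 * m) / 2 = m by omega] at this2
      simpa using this2
    · intro h m
      by_cases hm : m % 2 = 0 <;> simp only [hc, hm, reduceIte, if_true, if_false]
      · exact h _
      · exact hA2fin ω _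
  have hfull1 : P (π₁ ⁻¹' T) = 1 := by
    rw [hpre1, hMeq T2 hT2meas]
    have : π₂ ⁻¹' T2 = Set.univ := by
      rw [Set.eq_univ_iff_forall]
      intro ω
      exact fun m => hA2fin ω m
    rw [this, measure_univ]
  have hfull2 : P (π₂ ⁻¹' T) = 1 := by
    rw [hpre2, ← hMeq T1 hT1meas]
    have : π₁ ⁻¹' T1 = Set.univ := by
      rw [Set.eq_univ_iff_forall]
      intro ω
      exact fun m => hA1fin ω m
    rw [this, measure_univ]
  -- restriction to T costs nothing
  have hrestrict : ∀ (π : Ω → CS S), (@Measurable Ω (CS S) _ (countingSigmaField S) π) →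
      P (π ⁻¹' T) = 1 → ∀ (G : Set (CS S)), P (π ⁻¹' G) = P (π ⁻¹' (G ∩ T)) := by
    intro π hπ hfull G
    have hTc : P ((π ⁻¹' T)ᶜ) = 0 := by
      rw [measure_compl (hπ (hle _ hTmeas)) (measure_ne_top P _), hfull, measure_univ]
      simp
    refine le_antisymm ?_ (measure_mono (Set.preimage_mono Set.inter_subset_left))
    calc P (π ⁻¹' G) ≤ P (π ⁻¹' (G ∩ T) ∪ (π ⁻¹' T)ᶜ) := by
          refine measure_mono ?_
          intro ω hω
          by_cases hT : π ω ∈ T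
          · exact Or.inl ⟨hω, hT⟩
          · exact Or.inr hT
      _ ≤ P (π ⁻¹' (G ∩ T)) + P ((π ⁻¹' T)ᶜ) := measure_union_le _ _
      _ = P (π ⁻¹' (G ∩ T)) := by rw [hTc, add_zero]
  -- conclusion
  refine @Measure.ext (CS S) (countingSigmaField S) _ _ fun G hG => ?_
  rw [Measure.map_apply hm₁ hG, Measure.map_apply hm₂ hG]
  obtain ⟨G', hG', heq⟩ := trace_exists E hstable hgen c hCE hcuniv hG
  rw [hrestrict π₁ hm₁ hfull1 G, hrestrict π₂ hm₂ hfull2 G]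
  rw [show G ∩ T = G' ∩ T from heq]
  exact hMeq (G' ∩ T) (hG'.inter hTmeas)
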